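/- For every n ≥ 1, the set {x ∈ [1/2,1] : τ(x) > n} coincides, up to a countable set, with the interval [1/2, (1+ξ_n)/2]; moreover {x : τ(x) = 1} = [3/4,1] and, up to endpoints, {x : τ(x) = n+1} = ((1+ξ_{n+1})/2, (1+ξ_n)/2] for n ≥ 1. Consequently m(τ > n) = ξ_n = (1/2) n^{−α}(1 + 2ε sin((2πα/log c) log n)) for all n ≥ 1, where m is the normalized Lebesgue measure on [1/2,1]. -/

import Mathlib

open Set Filter Topology Real MeasureTheory

set_option maxHeartbeats 1600000 in
/-- return-time sets and tail for the perturbed Wang map. For `n ≥ 1`,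
`{x ∈ [1/2,1] : τ(x) > n}` coincides up to a countable set with `[1/2,(1+ξ_n)/2]`;
`{τ = 1}` is, up to a countable set, `[3/4,1]` and `{τ = n+1}` is, up to endpoints,
`((1+ξ_{n+1})/2,(1+ξ_n)/2]`; consequently `m(τ > n) = ξ_n` for `n ≥ 1`, where `m` is the
normalized Lebesgue measure on `[1/2,1]`. -/
theorem stmt_18 (α c ε : ℝ) (hα0 : 0 < α) (hα1 : α < 1) (hc : 1 < c) (hε : 0 < ε)
    (hsmall : 2 * ε * (1 + 2 * Real.pi / Real.log c) < 1)
    -- the sequence ξ: ξ₀ = 1, ξ_n = (1/2) n^(−α)(1 + 2ε sin((2πα/log c) log n))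
    (ξ : ℕ → ℝ) (hξ0 : ξ 0 = 1)
    (hξ : ∀ n : ℕ, 1 ≤ n → ξ n =
      (1/2) * (n : ℝ) ^ (-α) *
        (1 + 2 * ε * Real.sin ((2 * Real.pi * α / Real.log c) * Real.log (n : ℝ))))
    -- the perturbed Wang map T_ε
    (T : ℝ → ℝ)
    (hT1 : ∀ n : ℕ, 1 ≤ n → ∀ x ∈ Set.Icc (ξ (n + 1)) (ξ n),
      T x = ((ξ n - x) * ξ n + (x - ξ (n + 1)) * ξ (n - 1)) / (ξ n - ξ (n + 1)))
    (hT2 : ∀ x ∈ Set.Ioc (1/2 : ℝ) 1, T x = 2 * x - 1)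
    -- the first return time τ of T_ε to Y = [1/2,1]
    (τ : ℝ → ℕ)
    (hτ : ∀ x ∈ Set.Icc (1/2 : ℝ) 1,
      1 ≤ τ x ∧ T^[τ x] x ∈ Set.Icc (1/2 : ℝ) 1 ∧
      ∀ m : ℕ, 1 ≤ m → m < τ x → T^[m] x ∉ Set.Icc (1/2 : ℝ) 1) :
    (∀ n : ℕ, 1 ≤ n →
      (symmDiff {x : ℝ | x ∈ Set.Icc (1/2 : ℝ) 1 ∧ n < τ x}
        (Set.Icc (1/2 : ℝ) ((1 + ξ n) / 2))).Countable) ∧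
    (symmDiff {x : ℝ | x ∈ Set.Icc (1/2 : ℝ) 1 ∧ τ x = 1}
      (Set.Icc (3/4 : ℝ) 1)).Countable ∧
    (∀ n : ℕ, 1 ≤ n →
      (symmDiff {x : ℝ | x ∈ Set.Icc (1/2 : ℝ) 1 ∧ τ x = n + 1}
        (Set.Ioc ((1 + ξ (n + 1)) / 2) ((1 + ξ n) / 2))).Countable) ∧
    (∀ n : ℕ, 1 ≤ n →
      2 * (volume {x : ℝ | x ∈ Set.Icc (1/2 : ℝ) 1 ∧ n < τ x}).toReal = ξ n) := by
  classical
  have hπ : (0:ℝ) < Real.pi := Real.pi_pos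
  have hlc : 0 < Real.log c := Real.log_pos hc
  set θ : ℝ := 2 * Real.pi * α / Real.log c with hθdef
  have hP : 0 < 2 * Real.pi / Real.log c := by positivity
  have h2ε : 2 * ε < 1 := by nlinarith
  have hθpos : 0 < θ := by rw [hθdef]; positivity
  have hkey : 2 * ε * θ < α * (1 - 2 * ε) := by
    have h1 : 2 * ε * (2 * Real.pi / Real.log c) < 1 - 2 * ε := by nlinarith
    have h2 := mul_lt_mul_of_pos_left h1 hα0
    calc 2 * ε * θ = α * (2 * ε * (2 * Real.pi / Real.log c)) := by rw [hθdef]; ring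
    _ < α * (1 - 2 * ε) := h2
  set f : ℝ → ℝ := fun t => 1/2 * t ^ (-α) * (1 + 2 * ε * Real.sin (θ * Real.log t)) with hfdef
  have hξf : ∀ n : ℕ, 1 ≤ n → ξ n = f (n : ℝ) := fun n hn => hξ n hn
  have hderiv : ∀ t : ℝ, 0 < t →
      HasDerivAt f (1/2 * t ^ (-α - 1) *
        (-α * (1 + 2 * ε * Real.sin (θ * Real.log t)) + 2 * ε * θ * Real.cos (θ * Real.log t))) t := by
    intro t ht
    have h1 : HasDerivAt (fun t : ℝ => θ * Real.log t) (θ * t⁻¹) t :=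
      (Real.hasDerivAt_log ht.ne').const_mul θ
    have h2 : HasDerivAt (fun t : ℝ => Real.sin (θ * Real.log t))
        (Real.cos (θ * Real.log t) * (θ * t⁻¹)) t :=
      h1.sin
    have h3 : HasDerivAt (fun t : ℝ => 1 + 2 * ε * Real.sin (θ * Real.log t))
        (2 * ε * (Real.cos (θ * Real.log t) * (θ * t⁻¹))) t :=
      (h2.const_mul (2 * ε)).const_add 1
    have h4 : HasDerivAt (fun t : ℝ => 1/2 * t ^ (-α))
        (1/2 * (-α * t ^ (-α - 1))) t :=
      (Real.hasDerivAt_rpow_const (p := -α) (Or.inl ht.ne')).const_mul (1/2 : ℝ)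
    have h5 := h4.mul h3
    refine h5.congr_deriv ?_
    have hts : t ^ (-α - 1) = t ^ (-α) * t⁻¹ := by
      rw [Real.rpow_sub ht, Real.rpow_one, div_eq_mul_inv]
    rw [hts]; ring
  have hcont : ContinuousOn f (Set.Ici 1) := fun t ht =>
    (hderiv t (lt_of_lt_of_le one_pos ht)).continuousAt.continuousWithinAt
  have hanti : StrictAntiOn f (Set.Ici 1) := by
    apply strictAntiOn_of_deriv_neg (convex_Ici 1) hcont
    intro t ht
    rw [interior_Ici] at ht
    have ht0 : (0:ℝ) < t := lt_trans one_pos ht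
    rw [(hderiv t ht0).deriv]
    have hS1 := Real.neg_one_le_sin (θ * Real.log t)
    have hC := Real.cos_le_one (θ * Real.log t)
    have hB : -α * (1 + 2 * ε * Real.sin (θ * Real.log t))
        + 2 * ε * θ * Real.cos (θ * Real.log t) < 0 := by
      have hεθ : 0 ≤ 2 * ε * θ := by positivity
      nlinarith [mul_nonneg hεθ (sub_nonneg.2 hC),
        mul_nonneg (mul_nonneg hα0.le (by positivity : (0:ℝ) ≤ 2 * ε))
          (by linarith : 0 ≤ Real.sin (θ * Real.log t) + 1)]
    have hpre : 0 < 1/2 * t ^ (-α - 1) :=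
      mul_pos (by norm_num) (Real.rpow_pos_of_pos ht0 _)
    exact mul_neg_of_pos_of_neg hpre hB
  have hξ1 : ξ 1 = 1/2 := by
    rw [hξ 1 le_rfl]
    norm_num [Real.one_rpow, Real.log_one]
  have hξanti : StrictAnti ξ := by
    apply strictAnti_nat_of_succ_lt
    intro n
    rcases Nat.eq_zero_or_pos n with rfl | hn
    · rw [hξ1, hξ0]; norm_num
    · have h1 : (1:ℝ) ≤ (n:ℝ) := Nat.one_le_cast.2 hn
      have hmem1 : (n:ℝ) ∈ Set.Ici (1:ℝ) := h1
      have hmem2 : ((n:ℝ) + 1) ∈ Set.Ici (1:ℝ) := by simp only [Set.mem_Ici]; linarith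
      have hlt := hanti hmem1 hmem2 (by linarith)
      rw [hξf n hn, hξf (n+1) (by omega), Nat.cast_add, Nat.cast_one]
      exact hlt
  have hξpos : ∀ n : ℕ, 0 < ξ n := by
    intro n
    rcases Nat.eq_zero_or_pos n with rfl | hn
    · rw [hξ0]; norm_num
    · rw [hξ n hn]
      have hS1 := Real.neg_one_le_sin (θ * Real.log n)
      have hrp : 0 < (n:ℝ) ^ (-α) := Real.rpow_pos_of_pos (by exact_mod_cast hn) _
      have h1 : 0 < 1 + 2 * ε * Real.sin (θ * Real.log n) := by nlinarith
      exact mul_pos (mul_pos (by norm_num) hrp) h1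
  have hξle : ∀ n : ℕ, 1 ≤ n → ξ n ≤ 1/2 := fun n hn => by
    rw [← hξ1]; exact hξanti.antitone hn
  have htend : Filter.Tendsto ξ Filter.atTop (nhds 0) := by
    have hb : Filter.Tendsto (fun n : ℕ => 1/2 * (1 + 2*ε) * (n:ℝ) ^ (-α))
        Filter.atTop (nhds 0) := by
      have h1 := (tendsto_rpow_neg_atTop hα0).comp
        (tendsto_natCast_atTop_atTop (R := ℝ))
      have h2 := h1.const_mul (1/2 * (1 + 2*ε))
      simpa using h2
    apply squeeze_zero' (Filter.Eventually.of_forall fun n => (hξpos n).le) _ hb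
    filter_upwards [Filter.eventually_ge_atTop 1] with n hn
    rw [hξ n hn]
    have hS := Real.sin_le_one (θ * Real.log n)
    have hrp : (0:ℝ) ≤ (n:ℝ) ^ (-α) := (Real.rpow_pos_of_pos (by exact_mod_cast hn) _).le
    nlinarith [mul_nonneg hrp
      (by nlinarith [Real.sin_le_one (θ * Real.log n)] :
        (0:ℝ) ≤ (1 + 2*ε) - (1 + 2 * ε * Real.sin (θ * Real.log n)))]
  have hexlt : ∀ y : ℝ, 0 < y → ∃ m : ℕ, ξ m < y := fun y hy =>
    (htend.eventually_lt_const hy).exists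
  -- the one-step displacement of the map on each rung
  have hstep : ∀ n : ℕ, 1 ≤ n → ∀ y : ℝ, ξ (n+1) < y → y < ξ n →
      ξ n < T y ∧ T y < ξ (n-1) := by
    intro n hn y hy1 hy2
    have hmem : y ∈ Set.Icc (ξ (n+1)) (ξ n) := ⟨hy1.le, hy2.le⟩
    rw [hT1 n hn y hmem]
    have hd : 0 < ξ n - ξ (n+1) := sub_pos.2 (hξanti (Nat.lt_succ_self n))
    have h01 : ξ n < ξ (n-1) := hξanti (by omega)
    constructor
    · rw [lt_div_iff₀ hd]; nlinarith
    · rw [div_lt_iff₀ hd]; nlinarith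
  have horbit : ∀ k n : ℕ, 1 ≤ n → k ≤ n → ∀ y : ℝ, ξ (n+1) < y → y < ξ n →
      ξ (n+1-k) < T^[k] y ∧ T^[k] y < ξ (n-k) := by
    intro k
    induction k with
    | zero => intro n hn _ y h1 h2; simpa using ⟨h1, h2⟩
    | succ k ih =>
      intro n hn hk y h1 h2
      have hkn : k ≤ n := by omega
      obtain ⟨ih1, ih2⟩ := ih n hn hkn y h1 h2
      have hnk : 1 ≤ n - k := by omega
      have e1 : n + 1 - k = (n - k) + 1 := by omega
      rw [e1] at ih1
      have hst := hstep (n-k) hnk _ ih1 ih2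
      rw [Function.iterate_succ_apply']
      have e2 : n - k - 1 = n - (k+1) := by omega
      have e3 : n - k = n + 1 - (k+1) := by omega
      rw [e2] at hst
      rw [e3] at hst
      exact hst
  -- computation of the return time
  have hτcalc : ∀ x : ℝ, x ∈ Set.Icc (1/2 : ℝ) 1 → ∀ n : ℕ,
      ξ (n+1) < 2*x - 1 → 2*x - 1 < ξ n → τ x = n + 1 := by
    intro x hx n h1 h2
    have hx1 : x ≤ 1 := hx.2
    have hxhalf : 1/2 < x := by
      have := hξpos (n+1); linarith
    have hTx : T x = 2*x - 1 := hT2 x ⟨hxhalf, hx1⟩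
    obtain ⟨hτ1, hτ2, hτ3⟩ := hτ x hx
    rcases Nat.eq_zero_or_pos n with rfl | hn
    · have h1' : ξ 1 < 2*x - 1 := by simpa using h1
      have hmem : T^[1] x ∈ Set.Icc (1/2:ℝ) 1 := by
        rw [Function.iterate_one, hTx]
        rw [hξ1] at h1'
        rw [hξ0] at h2
        exact ⟨by linarith, by linarith⟩
      by_contra hne
      have hlt : 1 < τ x := by omega
      exact hτ3 1 le_rfl hlt hmem
    · have hmid : ∀ m : ℕ, m ≤ n →
          ξ (n+1-m) < T^[m+1] x ∧ T^[m+1] x < ξ (n-m) := by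
        intro m hm
        rw [Function.iterate_succ_apply, hTx]
        exact horbit m n hn hm _ h1 h2
      have hnotin : ∀ j : ℕ, 1 ≤ j → j ≤ n → T^[j] x ∉ Set.Icc (1/2:ℝ) 1 := by
        intro j hj1 hj2 hmem
        obtain ⟨_, hlt⟩ := hmid (j-1) (by omega)
        have e : j - 1 + 1 = j := by omega
        rw [e] at hlt
        have h1n : 1 ≤ n - (j-1) := by omega
        have hle : ξ (n - (j-1)) ≤ 1/2 := hξle _ h1n
        have := hmem.1
        linarith
      have hin : T^[n+1] x ∈ Set.Icc (1/2:ℝ) 1 := by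
        obtain ⟨hl, hr⟩ := hmid n le_rfl
        have e1 : n + 1 - n = 1 := by omega
        have e2 : n - n = 0 := by omega
        rw [e1, hξ1] at hl
        rw [e2, hξ0] at hr
        exact ⟨hl.le, hr.le⟩
      rcases lt_trichotomy (τ x) (n+1) with h | h | h
      · exact absurd hτ2 (hnotin (τ x) hτ1 (by omega))
      · exact h
      · exact absurd hin (hτ3 (n+1) (by omega) h)
  -- locating a point strictly between consecutive ξ's
  have hfind : ∀ y : ℝ, 0 < y → y < 1/2 → (∀ k : ℕ, y ≠ ξ k) →
      ∃ n : ℕ, ξ (n+1) < y ∧ y < ξ n := by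
    intro y hy0 hy2 hne
    have hex : ∃ m : ℕ, ξ m < y := hexlt y hy0
    have hm : ξ (Nat.find hex) < y := Nat.find_spec hex
    have hm1 : 1 ≤ Nat.find hex := by
      by_contra h
      have h0 : Nat.find hex = 0 := by omega
      rw [h0, hξ0] at hm; linarith
    refine ⟨Nat.find hex - 1, ?_, ?_⟩
    · have e : Nat.find hex - 1 + 1 = Nat.find hex := by omega
      rw [e]; exact hm
    · have hmin := Nat.find_min hex (show Nat.find hex - 1 < Nat.find hex by omega)
      push_neg at hmin
      exact lt_of_le_of_ne hmin (hne (Nat.find hex - 1))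
  -- exceptional countable set
  set E : Set ℝ := {(1:ℝ)/2} ∪ Set.range (fun k : ℕ => (1 + ξ k)/2) with hEdef
  have hEc : E.Countable := (Set.countable_singleton _).union (Set.countable_range _)
  have hEmem2 : ∀ (k : ℕ) (x : ℝ), x = (1 + ξ k)/2 → x ∈ E := by
    intro k x h
    rw [hEdef]
    exact Set.mem_union_right _ ⟨k, h.symm⟩
  have hmemE : ∀ x : ℝ, x ∉ E → x ≠ 1/2 ∧ ∀ k : ℕ, 2*x - 1 ≠ ξ k := by
    intro x hx
    simp only [hEdef, Set.mem_union, Set.mem_singleton_iff, Set.mem_range, not_or,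
      not_exists] at hx
    exact ⟨hx.1, fun k h => hx.2 k (by linarith)⟩
  -- classification of return times off the exceptional set
  have hclass : ∀ x : ℝ, x ∈ Set.Icc (1/2:ℝ) 1 → x ∉ E →
      ∃ k : ℕ, (ξ (k+1) < 2*x - 1 ∧ 2*x - 1 < ξ k) ∧ τ x = k + 1 := by
    intro x hx hxE
    obtain ⟨hxh, hxξ⟩ := hmemE x hxE
    have hx1 : x ≤ 1 := hx.2
    have hx0 : 1/2 < x := lt_of_le_of_ne hx.1 (Ne.symm hxh)
    have hyne : 2*x - 1 ≠ 1 := by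
      have := hxξ 0; rw [hξ0] at this; exact this
    have hy1 : 2*x - 1 < 1 := lt_of_le_of_ne (by linarith) hyne
    have hy0 : 0 < 2*x - 1 := by linarith
    rcases lt_trichotomy (2*x - 1) (1/2) with h | h | h
    · obtain ⟨n, hn1, hn2⟩ := hfind (2*x - 1) hy0 h hxξ
      exact ⟨n, ⟨hn1, hn2⟩, hτcalc x hx n hn1 hn2⟩
    · exact absurd (h.trans hξ1.symm) (hxξ 1)
    · have hA : ξ (0+1) < 2*x - 1 := by
        have e : ξ (0+1) = 1/2 := by simpa using hξ1
        rw [e]; linarith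
      have hB : 2*x - 1 < ξ 0 := by rw [hξ0]; linarith
      exact ⟨0, ⟨hA, hB⟩, hτcalc x hx 0 hA hB⟩
  -- countable symmetric difference from equality off E
  have hsub : ∀ A B : Set ℝ, A \ E = B \ E → (symmDiff A B).Countable := by
    intro A B h
    refine hEc.mono ?_
    intro x hx
    rcases Set.mem_symmDiff.1 hx with ⟨hA, hB⟩ | ⟨hB, hA⟩
    · by_contra hxE
      have hh : x ∈ A \ E := ⟨hA, hxE⟩
      rw [h] at hh
      exact hB hh.1
    · by_contra hxE
      have hh : x ∈ B \ E := ⟨hB, hxE⟩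
      rw [← h] at hh
      exact hA hh.1
  -- part 1 equality off E
  have part1eq : ∀ n : ℕ, 1 ≤ n →
      {x : ℝ | x ∈ Set.Icc (1/2:ℝ) 1 ∧ n < τ x} \ E
        = Set.Icc (1/2:ℝ) ((1 + ξ n)/2) \ E := by
    intro n hn
    ext x
    simp only [Set.mem_diff, Set.mem_setOf_eq, Set.mem_Icc]
    constructor
    · rintro ⟨⟨hx, hτx⟩, hxE⟩
      refine ⟨⟨hx.1, ?_⟩, hxE⟩
      obtain ⟨k, ⟨hk1, hk2⟩, hkτ⟩ := hclass x hx hxE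
      have hkn : n ≤ k := by omega
      have hmono : ξ k ≤ ξ n := hξanti.antitone hkn
      linarith
    · rintro ⟨⟨hx1, hx2⟩, hxE⟩
      have hlen : ξ n ≤ 1/2 := hξle n hn
      have hxle : x ≤ 1 := by linarith
      have hxmem : x ∈ Set.Icc (1/2:ℝ) 1 := ⟨hx1, hxle⟩
      refine ⟨⟨hxmem, ?_⟩, hxE⟩
      obtain ⟨k, ⟨hk1, hk2⟩, hkτ⟩ := hclass x hxmem hxE
      have hxne : x ≠ (1 + ξ n)/2 := fun h => hxE (hEmem2 n x h)
      have hxlt : 2*x - 1 < ξ n := by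
        rcases lt_or_eq_of_le hx2 with h | h
        · linarith
        · exact absurd h hxne
      have hlt : ξ (k+1) < ξ n := lt_trans hk1 hxlt
      have hnk : n < k + 1 := hξanti.lt_iff_gt.1 hlt
      omega
  -- part 2 equality off E
  have part2eq : {x : ℝ | x ∈ Set.Icc (1/2:ℝ) 1 ∧ τ x = 1} \ E
      = Set.Icc (3/4:ℝ) 1 \ E := by
    ext x
    simp only [Set.mem_diff, Set.mem_setOf_eq, Set.mem_Icc]
    constructor
    · rintro ⟨⟨hx, hτx⟩, hxE⟩
      obtain ⟨k, ⟨hk1, hk2⟩, hkτ⟩ := hclass x hx hxE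
      have hk0 : k = 0 := by omega
      subst hk0
      have e : ξ (0+1) = 1/2 := by simpa using hξ1
      rw [e] at hk1
      exact ⟨⟨by linarith, hx.2⟩, hxE⟩
    · rintro ⟨⟨hx1, hx2⟩, hxE⟩
      have hxmem : x ∈ Set.Icc (1/2:ℝ) 1 := ⟨by linarith, hx2⟩
      obtain ⟨k, ⟨hk1, hk2⟩, hkτ⟩ := hclass x hxmem hxE
      have hxne : x ≠ 3/4 := by
        intro h
        apply hxE
        apply hEmem2 1
        rw [hξ1, h]; norm_num
      have hxgt : 3/4 < x := lt_of_le_of_ne hx1 (Ne.symm hxne)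
      have h1k : ξ 1 < ξ k := by rw [hξ1]; linarith
      have hklt : k < 1 := hξanti.lt_iff_gt.1 h1k
      exact ⟨⟨hxmem, by omega⟩, hxE⟩
  -- part 3 equality off E
  have part3eq : ∀ n : ℕ, 1 ≤ n →
      {x : ℝ | x ∈ Set.Icc (1/2:ℝ) 1 ∧ τ x = n + 1} \ E
        = Set.Ioc ((1 + ξ (n+1))/2) ((1 + ξ n)/2) \ E := by
    intro n hn
    ext x
    simp only [Set.mem_diff, Set.mem_setOf_eq, Set.mem_Ioc]
    constructor
    · rintro ⟨⟨hx, hτx⟩, hxE⟩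
      obtain ⟨k, ⟨hk1, hk2⟩, hkτ⟩ := hclass x hx hxE
      have hk : k = n := by omega
      subst hk
      exact ⟨⟨by linarith, by linarith⟩, hxE⟩
    · rintro ⟨⟨hx1, hx2⟩, hxE⟩
      have hp := hξpos (n+1)
      have hq : 1/2 ≤ x := by linarith
      have hlen : ξ n ≤ 1/2 := hξle n hn
      have hxle : x ≤ 1 := by linarith
      have hxmem : x ∈ Set.Icc (1/2:ℝ) 1 := ⟨hq, hxle⟩
      obtain ⟨k, ⟨hk1, hk2⟩, hkτ⟩ := hclass x hxmem hxE
      have hxne : x ≠ (1 + ξ n)/2 := fun h => hxE (hEmem2 n x h)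
      have hlt : 2*x - 1 < ξ n := by
        rcases lt_or_eq_of_le hx2 with h | h
        · linarith
        · exact absurd h hxne
      have h1 : ξ (k+1) < ξ n := lt_trans hk1 hlt
      have h2 : ξ (n+1) < ξ k := lt_trans (by linarith : ξ (n+1) < 2*x - 1) hk2
      have hn1 : n < k + 1 := hξanti.lt_iff_gt.1 h1
      have hn2 : k < n + 1 := hξanti.lt_iff_gt.1 h2
      have hkn : k = n := by omega
      subst hkn
      exact ⟨⟨hxmem, hkτ⟩, hxE⟩
  -- measure computation
  have part4 : ∀ n : ℕ, 1 ≤ n →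
      2 * (volume {x : ℝ | x ∈ Set.Icc (1/2:ℝ) 1 ∧ n < τ x}).toReal = ξ n := by
    intro n hn
    have hae : {x : ℝ | x ∈ Set.Icc (1/2:ℝ) 1 ∧ n < τ x}
        =ᵐ[volume] Set.Icc (1/2:ℝ) ((1 + ξ n)/2) := by
      rw [MeasureTheory.ae_eq_set]
      constructor
      · apply measure_mono_null _ (hEc.measure_zero volume)
        intro x hx
        by_contra hxE
        have hh : x ∈ {x : ℝ | x ∈ Set.Icc (1/2:ℝ) 1 ∧ n < τ x} \ E := ⟨hx.1, hxE⟩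
        rw [part1eq n hn] at hh
        exact hx.2 hh.1
      · apply measure_mono_null _ (hEc.measure_zero volume)
        intro x hx
        by_contra hxE
        have hh : x ∈ Set.Icc (1/2:ℝ) ((1 + ξ n)/2) \ E := ⟨hx.1, hxE⟩
        rw [← part1eq n hn] at hh
        exact hx.2 hh.1
    have hvol : volume {x : ℝ | x ∈ Set.Icc (1/2:ℝ) 1 ∧ n < τ x}
        = ENNReal.ofReal ((1 + ξ n)/2 - 1/2) := by
      rw [measure_congr hae, Real.volume_Icc]
    rw [hvol, ENNReal.toReal_ofReal (by have := hξpos n; linarith)]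
    ring
  exact ⟨fun n hn => hsub _ _ (part1eq n hn), hsub _ _ part2eq,
    fun n hn => hsub _ _ (part3eq n hn), part4⟩
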